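/- Let H be a real inner product space and let {φ_i}_{i∈I} be a finite family of vectors in H. Then ‖f‖² = Σ_{i∈I} ⟨f, φ_i⟩² holds for every f ∈ H if and only if f = Σ_{i∈I} ⟨f, φ_i⟩ φ_i holds for every f ∈ H. -/

import Mathlib

open RealInnerProductSpace

/-- A finite family of vectors in a real inner product space is a (normalized) tight frame,
i.e. `‖f‖² = ∑ i, ⟪f, φ i⟫²` for all `f`, if and only if the perfect-reconstruction identity
`f = ∑ i, ⟪f, φ i⟫ • φ i` holds for all `f`. -/
theorem tight_frame_iff_reconstruction {H : Type*} [NormedAddCommGroup H]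
    [InnerProductSpace ℝ H] {ι : Type*} [Fintype ι] (φ : ι → H) :
    (∀ f : H, ‖f‖ ^ 2 = ∑ i, ⟪f, φ i⟫ ^ 2) ↔
      (∀ f : H, f = ∑ i, ⟪f, φ i⟫ • φ i) := by
  have key : ∀ g f : H, ⟪g, ∑ i, ⟪f, φ i⟫ • φ i⟫ = ∑ i, ⟪f, φ i⟫ * ⟪g, φ i⟫ := by
    intro g f
    rw [inner_sum]
    simp [real_inner_smul_right, real_inner_comm]
  constructor
  · intro h f
    have h2 : ∀ g : H, ⟪g, g⟫ = ∑ i, ⟪g, φ i⟫ * ⟪g, φ i⟫ := by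
      intro g
      rw [real_inner_self_eq_norm_sq, h g]
      simp [sq]
    have pol : ∀ f g : H, ⟪g, f⟫ = ∑ i, ⟪f, φ i⟫ * ⟪g, φ i⟫ := by
      intro f g
      have hfg := h2 (f + g)
      have hf := h2 f
      have hg := h2 g
      have e1 : ⟪f + g, f + g⟫ = ⟪f, f⟫ + 2 * ⟪g, f⟫ + ⟪g, g⟫ := by
        simp [inner_add_add_self, real_inner_comm]
        linarith [norm_add_sq_real f g]
      have e2 : ∑ i, ⟪f + g, φ i⟫ * ⟪f + g, φ i⟫ =
          ∑ i, ⟪f, φ i⟫ * ⟪f, φ i⟫ + 2 * ∑ i, ⟪f, φ i⟫ * ⟪g, φ i⟫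
            + ∑ i, ⟪g, φ i⟫ * ⟪g, φ i⟫ := by
        rw [Finset.mul_sum, ← Finset.sum_add_distrib, ← Finset.sum_add_distrib]
        apply Finset.sum_congr rfl
        intro i _
        simp [inner_add_left]
        ring
      rw [e1, e2, ← hf, ← hg] at hfg
      linarith
    apply ext_inner_left ℝ
    intro g
    rw [key, ← pol]
  · intro h f
    rw [← real_inner_self_eq_norm_sq]
    nth_rewrite 2 [h f]
    rw [key]
    simp [sq]
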